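/- arXiv:2409.14189 — 2 statements merged into one kernel-verified Lean document; each statement's English description precedes it below -/
import Mathlib

section
/- Let σ be a nondecreasing sigmoidal function satisfying (Σ1), (Σ2), (Σ3), let f: [a,b] → ℝ be continuous, and let F_n be the associated neural network operators. Then lim_{n→+∞} sup_{x∈[a,b]} |F_n(f, x) − f(x)| = 0. -/
open Filter Topology MeasureTheory

/-- The density (kernel) function generated by a sigmoidal function. -/
noncomputable def phiFn (σ : ℝ → ℝ) (x : ℝ) : ℝ := (σ (x + 1) - σ (x - 1)) / 2

/-- σ is a (measurable) sigmoidal function. -/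
def Sigmoidal (σ : ℝ → ℝ) : Prop :=
  Measurable σ ∧ Tendsto σ atBot (𝓝 0) ∧ Tendsto σ atTop (𝓝 1)

/-- (Σ1): σ(x) - 1/2 is an odd function. -/
def Sigma1 (σ : ℝ → ℝ) : Prop := ∀ x : ℝ, σ (-x) - 1/2 = -(σ x - 1/2)

/-- (Σ2): σ ∈ C²(ℝ) and σ is concave on [0, +∞). -/
def Sigma2 (σ : ℝ → ℝ) : Prop := ContDiff ℝ 2 σ ∧ ConcaveOn ℝ (Set.Ici 0) σ

/-- (Σ3): σ(x) = O(|x|^{-α-1}) as x → -∞, with α > 0. -/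
def Sigma3 (σ : ℝ → ℝ) (α : ℝ) : Prop :=
  0 < α ∧ σ =O[atBot] fun x : ℝ => |x| ^ (-α - 1)

/-- (Σ4): σ ∈ C^m(ℝ), m ≥ 2, and for each s = 1,…,m there are constants
`K s, C s > 0` with |σ^{(s)}(x)| ≤ C s * |x|^{-β-1} for |x| ≥ K s, where β > m + 1. -/
def Sigma4 (σ : ℝ → ℝ) (m : ℕ) (β : ℝ) (K C : ℕ → ℝ) : Prop :=
  2 ≤ m ∧ (m : ℝ) + 1 < β ∧ ContDiff ℝ m σ ∧
    ∀ s : ℕ, 1 ≤ s → s ≤ m → 0 < K s ∧ 0 < C s ∧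
      ∀ x : ℝ, K s ≤ |x| → |iteratedDeriv s σ x| ≤ C s * |x| ^ (-β - 1)

/-- Algebraic moment of order ν of Φ. -/
noncomputable def algMoment (Φ : ℝ → ℝ) (ν : ℕ) (x : ℝ) : ℝ :=
  ∑' k : ℤ, Φ (x - (k : ℝ)) * ((k : ℝ) - x) ^ ν

/-- (Σ5): the algebraic moments of order j = 1,…,m of φ_σ are constants A j. -/
def Sigma5 (σ : ℝ → ℝ) (m : ℕ) (A : ℕ → ℝ) : Prop :=
  ∀ j : ℕ, 1 ≤ j → j ≤ m → ∀ x : ℝ, algMoment (phiFn σ) j x = A j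

/-- Truncated algebraic moment of order ν of Φ (associated with integers a < b). -/
noncomputable def truncMoment (Φ : ℝ → ℝ) (ν : ℕ) (a b : ℤ) (n : ℕ) (u : ℝ) : ℝ :=
  ∑ k ∈ Finset.Icc ((n : ℤ) * a) ((n : ℤ) * b), Φ (u - (k : ℝ)) * ((k : ℝ) - u) ^ ν

/-- The ν-th discrete absolute moment function of Φ (before taking sup over u). -/
noncomputable def discMoment (Φ : ℝ → ℝ) (ν : ℝ) (u : ℝ) : ℝ :=
  ∑' k : ℤ, |Φ (u - (k : ℝ))| * |u - (k : ℝ)| ^ ν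

/-- The Riemann zeta function (as a real series), ζ(p) = ∑_{i≥1} i^{-p}. -/
noncomputable def zetaR (p : ℝ) : ℝ := ∑' i : ℕ, ((i : ℝ) + 1) ^ (-p)

/-- The NN operator F_n activated by σ. -/
noncomputable def Fop (σ : ℝ → ℝ) (f : ℝ → ℝ) (a b : ℝ) (n : ℕ) (x : ℝ) : ℝ :=
  (∑ k ∈ Finset.Icc ⌈(n : ℝ) * a⌉ ⌊(n : ℝ) * b⌋, f ((k : ℝ) / n) * phiFn σ ((n : ℝ) * x - k)) /
    (∑ k ∈ Finset.Icc ⌈(n : ℝ) * a⌉ ⌊(n : ℝ) * b⌋, phiFn σ ((n : ℝ) * x - k))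

/-- The modified NN operator F̃_n (integer endpoints a < b). -/
noncomputable def Ftil (σ : ℝ → ℝ) (f : ℝ → ℝ) (a b : ℤ) (n : ℕ) (x : ℝ) : ℝ :=
  ∑ k ∈ Finset.Icc ((n : ℤ) * a) ((n : ℤ) * b), f ((k : ℝ) / n) * phiFn σ ((n : ℝ) * x - (k : ℝ))

/-- Sup-norm of g on [a,b]. -/
noncomputable def supNormOn (g : ℝ → ℝ) (a b : ℝ) : ℝ := ⨆ x : Set.Icc a b, |g x|

/-- Modulus of continuity of g on [a,b]. -/
noncomputable def modulus (g : ℝ → ℝ) (a b h : ℝ) : ℝ :=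
  sSup {y : ℝ | ∃ u ∈ Set.Icc a b, ∃ v ∈ Set.Icc a b, |u - v| ≤ h ∧ y = |g u - g v|}

/-- Discrete absolute moment (natural order ν) of Φ: sup over u of the moment series. -/
noncomputable def dmomentN (Φ : ℝ → ℝ) (ν : ℕ) : ℝ :=
  ⨆ u : ℝ, ∑' k : ℤ, |Φ (u - (k : ℝ))| * |u - (k : ℝ)| ^ ν


section Helpers
variable {σ : ℝ → ℝ} {α : ℝ}

lemma sigma_neg (h1 : Sigma1 σ) (x : ℝ) : σ (-x) = 1 - σ x := by
  have := h1 x; linarith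

lemma sigma_zero (h1 : Sigma1 σ) : σ 0 = 1/2 := by
  have := h1 0; rw [neg_zero] at this; linarith

lemma phi_even (h1 : Sigma1 σ) (x : ℝ) : phiFn σ (-x) = phiFn σ x := by
  unfold phiFn
  have e1 : -x + 1 = -(x - 1) := by ring
  have e2 : -x - 1 = -(x + 1) := by ring
  rw [e1, e2, sigma_neg h1, sigma_neg h1]; ring

lemma phi_nonneg (hmono : Monotone σ) (x : ℝ) : 0 ≤ phiFn σ x := by
  have : σ (x - 1) ≤ σ (x + 1) := hmono (by linarith)
  unfold phiFn; linarith

lemma sigma_le_one (hσ : Sigmoidal σ) (hmono : Monotone σ) (x : ℝ) : σ x ≤ 1 :=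
  ge_of_tendsto hσ.2.2 (eventually_atTop.2 ⟨x, fun _ hy => hmono hy⟩)

lemma sigma_one_gt (hσ : Sigmoidal σ) (hmono : Monotone σ) (h1 : Sigma1 σ)
    (h2 : Sigma2 σ) : 1/2 < σ 1 := by
  by_contra h
  push_neg at h
  have h0 : σ 0 = 1/2 := sigma_zero h1
  have h1' : σ 1 = 1/2 := le_antisymm h (h0 ▸ hmono (by norm_num))
  have key : ∀ t : ℝ, 1 ≤ t → σ t ≤ 1/2 := by
    intro t ht
    have ht0 : (0:ℝ) < t := by linarith
    have hc := h2.2.2 (Set.mem_Ici.2 le_rfl) (Set.mem_Ici.2 ht0.le)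
      (sub_nonneg.2 (by rw [div_le_one ht0]; linarith : 1/t ≤ 1))
      (by positivity : (0:ℝ) ≤ 1/t) (by ring)
    simp only [smul_eq_mul, mul_zero, zero_add] at hc
    rw [h0, show 1/t*t = 1 by field_simp, h1', one_div] at hc
    have h2' : t⁻¹ * σ t ≤ t⁻¹ * (1/2) := by
      have hi : (0:ℝ) < t⁻¹ := by positivity
      nlinarith [hc]
    have := le_of_mul_le_mul_left h2' (by positivity : (0:ℝ) < t⁻¹)
    linarith
  have : (1:ℝ) ≤ 1/2 := le_of_tendsto hσ.2.2 (eventually_atTop.2 ⟨1, key⟩)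
  linarith

lemma phi_lb (hmono : Monotone σ) (h1 : Sigma1 σ) :
    ∀ t : ℝ, |t| ≤ 1 → (σ 1 - 1/2)/2 ≤ phiFn σ t := by
  have h0 : σ 0 = 1/2 := sigma_zero h1
  have key : ∀ t : ℝ, 0 ≤ t → t ≤ 1 → (σ 1 - 1/2)/2 ≤ phiFn σ t := by
    intro t ht0 ht1
    have e1 : σ 1 ≤ σ (t+1) := hmono (by linarith)
    have e2 : σ (t-1) ≤ σ 0 := hmono (by linarith)
    unfold phiFn; linarith
  intro t ht
  rcases le_total 0 t with h | h
  · exact key t h (by rwa [abs_of_nonneg h] at ht)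
  · rw [← phi_even h1]; exact key (-t) (by linarith) (by rwa [abs_of_nonpos h] at ht)

lemma phi_decay (hσ : Sigmoidal σ) (hmono : Monotone σ) (h1 : Sigma1 σ) (h3 : Sigma3 σ α) :
    ∃ C' : ℝ, 0 < C' ∧ ∃ T' : ℝ, 2 ≤ T' ∧
      ∀ t : ℝ, T' ≤ |t| → phiFn σ t ≤ C' * |t| ^ (-α - 1) := by
  obtain ⟨C, hC⟩ := h3.2.bound
  rw [eventually_atBot] at hC
  obtain ⟨B, hB⟩ := hC
  refine ⟨max 1 (|C| * 2 ^ (α+1) / 2), lt_max_of_lt_left one_pos, max 2 (1 - B),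
    le_max_left _ _, ?_⟩
  intro t ht
  have hs2 : (2:ℝ) ≤ |t| := le_trans (le_max_left _ _) ht
  have hsB : 1 - |t| ≤ B := by have := le_trans (le_max_right _ _) ht; linarith
  set s := |t| with hs
  have hphit : phiFn σ t = phiFn σ s := by
    rcases abs_choice t with h | h
    · rw [hs, h]
    · rw [hs, h, phi_even h1]
  have hub : phiFn σ s ≤ σ (1 - s) / 2 := by
    have e1 : σ (s + 1) ≤ 1 := sigma_le_one hσ hmono _
    have e2 : σ (-(s-1)) = 1 - σ (s-1) := sigma_neg h1 _
    have e3 : -(s-1) = 1 - s := by ring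
    rw [e3] at e2
    unfold phiFn; linarith
  have hB' := hB (1 - s) hsB
  rw [Real.norm_eq_abs, Real.norm_eq_abs,
    abs_of_nonneg (Real.rpow_nonneg (abs_nonneg _) _)] at hB'
  have habs : |1 - s| = s - 1 := by rw [abs_of_nonpos (by linarith)]; ring
  rw [habs] at hB'
  have hσle : σ (1 - s) ≤ |C| * (s - 1) ^ (-α - 1) := by
    calc σ (1 - s) ≤ |σ (1 - s)| := le_abs_self _
      _ ≤ C * (s-1) ^ (-α-1) := hB'
      _ ≤ |C| * (s-1) ^ (-α-1) := by
          have := Real.rpow_nonneg (show (0:ℝ) ≤ s - 1 by linarith) (-α-1)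
          exact mul_le_mul_of_nonneg_right (le_abs_self C) this
  have hmon : (s - 1) ^ (-α-1) ≤ (s/2) ^ (-α-1) := by
    apply Real.rpow_le_rpow_of_nonpos (by linarith) (by linarith) (by linarith [h3.1])
  have hsplit : (s/2) ^ (-α-1) = 2 ^ (α+1) * s ^ (-α-1) := by
    rw [Real.div_rpow (by linarith) (by norm_num), div_eq_mul_inv,
      ← Real.rpow_neg (by norm_num : (0:ℝ) ≤ 2)]
    rw [show -(-α-1) = α+1 by ring]
    ring
  have hrpos : 0 ≤ s ^ (-α-1) := Real.rpow_nonneg (by linarith) _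
  calc phiFn σ t = phiFn σ s := hphit
    _ ≤ σ (1 - s)/2 := hub
    _ ≤ |C| * (s-1) ^ (-α-1) / 2 := by linarith
    _ ≤ |C| * ((s/2) ^ (-α-1)) / 2 := by
        have := mul_le_mul_of_nonneg_left hmon (abs_nonneg C); linarith
    _ = (|C| * 2 ^ (α+1) / 2) * s ^ (-α-1) := by rw [hsplit]; ring
    _ ≤ max 1 (|C| * 2 ^ (α+1) / 2) * s ^ (-α-1) :=
        mul_le_mul_of_nonneg_right (le_max_right _ _) hrpos

end Helpers

theorem uniform_convergence_NN (σ : ℝ → ℝ) (α : ℝ) (hσ : Sigmoidal σ) (hmono : Monotone σ)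
    (h1 : Sigma1 σ) (h2 : Sigma2 σ) (h3 : Sigma3 σ α)
    (a b : ℝ) (hab : a < b) (f : ℝ → ℝ) (hf : ContinuousOn f (Set.Icc a b)) :
    TendstoUniformlyOn (fun (n : ℕ) (x : ℝ) => Fop σ f a b n x) f atTop (Set.Icc a b) := by
  have hα := h3.1
  set c : ℝ := (σ 1 - 1/2)/2 with hcdef
  have hc : 0 < c := by
    have := sigma_one_gt hσ hmono h1 h2; rw [hcdef]; linarith
  obtain ⟨M, hM⟩ := isCompact_Icc.exists_bound_of_continuousOn hf
  have hM0 : 0 ≤ M := le_trans (norm_nonneg _) (hM a ⟨le_refl a, hab.le⟩)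
  obtain ⟨C', hC'pos, T', hT'2, hdecay⟩ := phi_decay hσ hmono h1 h3
  rw [Metric.tendstoUniformlyOn_iff]
  intro ε hε
  have hUC : UniformContinuousOn f (Set.Icc a b) :=
    isCompact_Icc.uniformContinuousOn_of_continuous hf
  rw [Metric.uniformContinuousOn_iff] at hUC
  obtain ⟨δ, hδ0, hδ⟩ := hUC (ε/2) (half_pos hε)
  -- tendsto of the error term
  have hba : (0:ℝ) < b - a := by linarith
  have base : Tendsto (fun n : ℕ => ((n:ℝ)*(b-a)+1) * ((n:ℝ)*δ)^(-α-1)) atTop (𝓝 0) := by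
    have ha' : Tendsto (fun n : ℕ => ((n:ℝ))^(-α)) atTop (𝓝 0) :=
      (tendsto_rpow_neg_atTop hα).comp tendsto_natCast_atTop_atTop
    have hb' : Tendsto (fun n : ℕ => ((n:ℝ))^(-α-1)) atTop (𝓝 0) := by
      have h := (tendsto_rpow_neg_atTop (by linarith : (0:ℝ) < α+1)).comp
        (tendsto_natCast_atTop_atTop (R := ℝ))
      simpa [Function.comp_def, show -(α+1) = -α-1 by ring] using h
    have h1'' : Tendsto (fun n : ℕ => ((b-a) * ((n:ℝ))^(-α) + ((n:ℝ))^(-α-1)) * δ^(-α-1))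
        atTop (𝓝 0) := by
      simpa using ((ha'.const_mul (b-a)).add hb').mul_const (δ^(-α-1))
    apply h1''.congr'
    filter_upwards [eventually_ge_atTop 1] with n hn
    have hn0 : (0:ℝ) < (n:ℝ) := by exact_mod_cast hn
    rw [Real.mul_rpow hn0.le hδ0.le]
    have key : ((n:ℝ))^(-α) = (n:ℝ)^(1:ℝ) * ((n:ℝ))^(-α-1) := by
      rw [← Real.rpow_add hn0]; congr 1; ring
    rw [key, Real.rpow_one]; ring
  have hev3 : ∀ᶠ n : ℕ in atTop,
      (((n:ℝ)*(b-a)+1) * (2*M*C'*((n:ℝ)*δ)^(-α-1))) / c < ε/2 := by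
    have h := (base.mul_const (2*M*C')).div_const c
    have h2' : Tendsto (fun n : ℕ =>
        (((n:ℝ)*(b-a)+1) * (2*M*C'*((n:ℝ)*δ)^(-α-1))) / c) atTop (𝓝 0) := by
      simpa using h.congr fun n => by ring
    exact h2'.eventually_lt_const (half_pos hε)
  have hev1 : ∀ᶠ n : ℕ in atTop, 1 ≤ (n:ℝ)*(b-a) :=
    (tendsto_natCast_atTop_atTop.atTop_mul_const hba).eventually_ge_atTop 1
  have hev2 : ∀ᶠ n : ℕ in atTop, T' ≤ (n:ℝ)*δ :=
    (tendsto_natCast_atTop_atTop.atTop_mul_const hδ0).eventually_ge_atTop T'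
  filter_upwards [eventually_ge_atTop 1, hev1, hev2, hev3] with n hn1 hnba hnδ hnL
  intro x hx
  have hn0 : (0:ℝ) < (n:ℝ) := by exact_mod_cast hn1
  set S : Finset ℤ := Finset.Icc ⌈(n:ℝ)*a⌉ ⌊(n:ℝ)*b⌋ with hSdef
  have hSne : ⌈(n:ℝ)*a⌉ ≤ ⌊(n:ℝ)*b⌋ := by
    rw [Int.le_floor]
    have := Int.ceil_lt_add_one ((n:ℝ)*a)
    have hh : (n:ℝ)*a + 1 ≤ (n:ℝ)*b := by nlinarith
    linarith
  -- existence of a close node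
  obtain ⟨k0, hk0S, hk0⟩ : ∃ k0 ∈ S, |(n:ℝ)*x - (k0:ℝ)| ≤ 1 := by
    by_cases hcase : ⌈(n:ℝ)*a⌉ ≤ ⌊(n:ℝ)*x⌋
    · refine ⟨⌊(n:ℝ)*x⌋, Finset.mem_Icc.2 ⟨hcase,
        Int.floor_mono (mul_le_mul_of_nonneg_left hx.2 hn0.le)⟩, ?_⟩
      have := Int.floor_le ((n:ℝ)*x)
      have := Int.lt_floor_add_one ((n:ℝ)*x)
      rw [abs_le]; constructor <;> push_cast <;> linarith
    · refine ⟨⌈(n:ℝ)*a⌉, Finset.mem_Icc.2 ⟨le_refl _, hSne⟩, ?_⟩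
      push_neg at hcase
      have hub : ⌈(n:ℝ)*a⌉ ≤ ⌊(n:ℝ)*x⌋ + 1 := by
        have h' : ⌈(n:ℝ)*a⌉ ≤ ⌈(n:ℝ)*x⌉ :=
          Int.ceil_mono (mul_le_mul_of_nonneg_left hx.1 hn0.le)
        exact le_trans h' (Int.ceil_le_floor_add_one _)
      have h1' : ((⌈(n:ℝ)*a⌉ : ℤ) : ℝ) ≤ (⌊(n:ℝ)*x⌋ : ℝ) + 1 := by exact_mod_cast hub
      have h2' : ((n:ℝ)*x) < ((⌈(n:ℝ)*a⌉ : ℤ) : ℝ) := by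
        have hint : (⌊(n:ℝ)*x⌋ : ℝ) + 1 ≤ ((⌈(n:ℝ)*a⌉ : ℤ) : ℝ) := by
          exact_mod_cast Int.add_one_le_iff.2 hcase
        linarith [Int.lt_floor_add_one ((n:ℝ)*x)]
      have := Int.floor_le ((n:ℝ)*x)
      rw [abs_le]; constructor <;> linarith
  set D : ℝ := ∑ k ∈ S, phiFn σ ((n:ℝ)*x - (k:ℝ)) with hDdef
  have hDc : c ≤ D := by
    refine le_trans (phi_lb hmono h1 _ hk0) ?_
    exact Finset.single_le_sum (f := fun k : ℤ => phiFn σ ((n:ℝ)*x - (k:ℝ)))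
      (fun k _ => phi_nonneg hmono _) hk0S
  have hD0 : 0 < D := lt_of_lt_of_le hc hDc
  set KK : ℝ := 2*M*C'*((n:ℝ)*δ)^(-α-1) with hKKdef
  have hKK0 : 0 ≤ KK := by
    have := Real.rpow_nonneg (by positivity : (0:ℝ) ≤ (n:ℝ)*δ) (-α-1)
    positivity
  -- membership of nodes in [a,b]
  have hnode : ∀ k ∈ S, (k:ℝ)/(n:ℝ) ∈ Set.Icc a b := by
    intro k hk
    rw [hSdef, Finset.mem_Icc] at hk
    have hl : (n:ℝ)*a ≤ (k:ℝ) := le_trans (Int.le_ceil _) (by exact_mod_cast hk.1)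
    have hr : (k:ℝ) ≤ (n:ℝ)*b := le_trans (by exact_mod_cast hk.2) (Int.floor_le _)
    constructor
    · rw [le_div_iff₀ hn0]; linarith
    · rw [div_le_iff₀ hn0]; linarith
  -- per-term bound
  have hterm : ∀ k ∈ S, |f ((k:ℝ)/(n:ℝ)) - f x| * phiFn σ ((n:ℝ)*x - (k:ℝ)) ≤
      (ε/2) * phiFn σ ((n:ℝ)*x - (k:ℝ)) + KK := by
    intro k hk
    have hφ0 : 0 ≤ phiFn σ ((n:ℝ)*x - (k:ℝ)) := phi_nonneg hmono _
    by_cases hnear : |(n:ℝ)*x - (k:ℝ)| < (n:ℝ)*δ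
    · have hd : dist ((k:ℝ)/(n:ℝ)) x < δ := by
        rw [Real.dist_eq, abs_sub_comm]
        have : |x - (k:ℝ)/(n:ℝ)| = |(n:ℝ)*x - (k:ℝ)| / (n:ℝ) := by
          rw [show x - (k:ℝ)/(n:ℝ) = ((n:ℝ)*x - (k:ℝ))/(n:ℝ) by field_simp]
          rw [abs_div, abs_of_pos hn0]
        rw [this, div_lt_iff₀ hn0]
        calc |(n:ℝ)*x - (k:ℝ)| < (n:ℝ)*δ := hnear
          _ = δ * (n:ℝ) := by ring
      have hfd : |f ((k:ℝ)/(n:ℝ)) - f x| < ε/2 := by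
        have := hδ _ (hnode k hk) _ hx hd
        rwa [Real.dist_eq] at this
      have : |f ((k:ℝ)/(n:ℝ)) - f x| * phiFn σ ((n:ℝ)*x - (k:ℝ)) ≤
          (ε/2) * phiFn σ ((n:ℝ)*x - (k:ℝ)) :=
        mul_le_mul_of_nonneg_right hfd.le hφ0
      linarith
    · push_neg at hnear
      have hTle : T' ≤ |(n:ℝ)*x - (k:ℝ)| := le_trans hnδ hnear
      have hφub : phiFn σ ((n:ℝ)*x - (k:ℝ)) ≤ C' * ((n:ℝ)*δ)^(-α-1) := by
        refine le_trans (hdecay _ hTle) ?_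
        refine mul_le_mul_of_nonneg_left ?_ hC'pos.le
        exact Real.rpow_le_rpow_of_nonpos (by positivity) hnear (by linarith)
      have hf2M : |f ((k:ℝ)/(n:ℝ)) - f x| ≤ 2*M := by
        have h1'' := hM _ (hnode k hk)
        have h2'' := hM x hx
        rw [Real.norm_eq_abs] at h1'' h2''
        calc |f ((k:ℝ)/(n:ℝ)) - f x| ≤ |f ((k:ℝ)/(n:ℝ))| + |f x| := abs_sub _ _
          _ ≤ 2*M := by linarith
      have hmm : |f ((k:ℝ)/(n:ℝ)) - f x| * phiFn σ ((n:ℝ)*x - (k:ℝ)) ≤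
          (2*M) * (C' * ((n:ℝ)*δ)^(-α-1)) :=
        mul_le_mul hf2M hφub hφ0 (by linarith)
      have hε' : 0 ≤ (ε/2) * phiFn σ ((n:ℝ)*x - (k:ℝ)) := by positivity
      rw [hKKdef]; nlinarith
  -- rewrite Fop - f x
  have hnum : Fop σ f a b n x - f x =
      (∑ k ∈ S, (f ((k:ℝ)/(n:ℝ)) - f x) * phiFn σ ((n:ℝ)*x - (k:ℝ))) / D := by
    have expand : ∑ k ∈ S, (f ((k:ℝ)/(n:ℝ)) - f x) * phiFn σ ((n:ℝ)*x - (k:ℝ)) =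
        (∑ k ∈ S, f ((k:ℝ)/(n:ℝ)) * phiFn σ ((n:ℝ)*x - (k:ℝ))) - f x * D := by
      rw [hDdef, Finset.mul_sum, ← Finset.sum_sub_distrib]
      exact Finset.sum_congr rfl fun k _ => by ring
    rw [expand, sub_div, mul_div_assoc, div_self hD0.ne', mul_one]
    rfl
  -- card bound
  have hcard : ((S.card : ℕ) : ℝ) ≤ (n:ℝ)*(b-a)+1 := by
    have hmm : (0:ℤ) ≤ ⌊(n:ℝ)*b⌋ + 1 - ⌈(n:ℝ)*a⌉ := by linarith [hSne]
    have hcount : (S.card : ℤ) = ⌊(n:ℝ)*b⌋ + 1 - ⌈(n:ℝ)*a⌉ := by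
      rw [hSdef, Int.card_Icc, Int.toNat_of_nonneg hmm]
    have hcr : ((S.card : ℕ) : ℝ) = ((⌊(n:ℝ)*b⌋ : ℝ) + 1 - (⌈(n:ℝ)*a⌉ : ℝ)) := by
      exact_mod_cast congrArg (fun z : ℤ => (z : ℝ)) hcount
    rw [hcr]
    have hfl := Int.floor_le ((n:ℝ)*b)
    have hce := Int.le_ceil ((n:ℝ)*a)
    have : (n:ℝ)*b - (n:ℝ)*a = (n:ℝ)*(b-a) := by ring
    linarith
  -- final estimate
  rw [Real.dist_eq, show f x - Fop σ f a b n x = -(Fop σ f a b n x - f x) by ring, abs_neg,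
    hnum, abs_div, abs_of_pos hD0]
  have hsum1 : |∑ k ∈ S, (f ((k:ℝ)/(n:ℝ)) - f x) * phiFn σ ((n:ℝ)*x - (k:ℝ))| ≤
      (ε/2) * D + (S.card : ℝ) * KK := by
    calc |∑ k ∈ S, (f ((k:ℝ)/(n:ℝ)) - f x) * phiFn σ ((n:ℝ)*x - (k:ℝ))|
        ≤ ∑ k ∈ S, |(f ((k:ℝ)/(n:ℝ)) - f x) * phiFn σ ((n:ℝ)*x - (k:ℝ))| :=
          Finset.abs_sum_le_sum_abs _ _
      _ = ∑ k ∈ S, |f ((k:ℝ)/(n:ℝ)) - f x| * phiFn σ ((n:ℝ)*x - (k:ℝ)) := by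
          refine Finset.sum_congr rfl fun k _ => ?_
          rw [abs_mul, abs_of_nonneg (phi_nonneg hmono _)]
      _ ≤ ∑ k ∈ S, ((ε/2) * phiFn σ ((n:ℝ)*x - (k:ℝ)) + KK) := Finset.sum_le_sum hterm
      _ = (ε/2) * D + (S.card : ℝ) * KK := by
          rw [Finset.sum_add_distrib, Finset.sum_const, ← Finset.mul_sum, hDdef,
            nsmul_eq_mul]
  calc |∑ k ∈ S, (f ((k:ℝ)/(n:ℝ)) - f x) * phiFn σ ((n:ℝ)*x - (k:ℝ))| / D
      ≤ ((ε/2) * D + (S.card : ℝ) * KK) / D := by gcongr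
    _ = ε/2 + (S.card : ℝ) * KK / D := by field_simp
    _ ≤ ε/2 + (((n:ℝ)*(b-a)+1) * KK) / c := by
        have hnum0 : 0 ≤ (S.card : ℝ) * KK := by positivity
        have s1 : (S.card : ℝ) * KK / D ≤ (S.card : ℝ) * KK / c :=
          div_le_div_of_nonneg_left hnum0 hc hDc
        have s2 : (S.card : ℝ) * KK / c ≤ (((n:ℝ)*(b-a)+1) * KK) / c :=
          (div_le_div_iff_of_pos_right hc).2 (mul_le_mul_of_nonneg_right hcard hKK0)
        linarith
    _ < ε/2 + ε/2 := by
        have : (((n:ℝ)*(b-a)+1) * KK) / c < ε/2 := by rw [hKKdef]; exact hnL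
        linarith
    _ = ε := by ring
end

section
/- Let σ be a nondecreasing sigmoidal function satisfying (Σ1)–(Σ4), let a < b be integers, and let δ > 0 with a + δ < b − δ. Then lim_{n→+∞} m^n_0(φ_σ, nx) = 1, uniformly with respect to x ∈ I_δ := [a+δ, b−δ], where m^n_0(φ_σ, nx) = ∑_{k=na}^{nb} φ_σ(nx − k). -/
open Filter Topology MeasureTheory

private lemma tele_sum (f : ℤ → ℝ) (A B : ℤ) (hB : A ≤ B) :
    ∑ k ∈ Finset.Icc A B, (f k - f (k+2)) = f A + f (A+1) - f (B+1) - f (B+2) := by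
  refine Int.le_induction (motive := fun B _ => ∑ k ∈ Finset.Icc A B, (f k - f (k+2)) = f A + f (A+1) - f (B+1) - f (B+2)) ?_ ?_ B hB
  · beta_reduce
    rw [Finset.Icc_self, Finset.sum_singleton]; ring_nf
  · intro B hB' ih
    beta_reduce
    beta_reduce at ih
    have hins : Finset.Icc A (B+1) = insert (B+1) (Finset.Icc A B) := by
      ext k; simp only [Finset.mem_Icc, Finset.mem_insert]; omega
    have hnm : (B+1) ∉ Finset.Icc A B := by simp
    rw [hins, Finset.sum_insert hnm, ih]
    have e1 : B + 1 + 1 = B + 2 := by ring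
    have e2 : B + 1 + 2 = B + 2 + 1 := by ring
    rw [e1, e2]; ring

theorem trunc_moment_zero_uniform_limit (σ : ℝ → ℝ) (α β : ℝ) (m : ℕ) (K C : ℕ → ℝ)
    (hσ : Sigmoidal σ) (hmono : Monotone σ) (h1 : Sigma1 σ) (h2 : Sigma2 σ) (h3 : Sigma3 σ α)
    (h4 : Sigma4 σ m β K C) (a b : ℤ) (hab : a < b)
    (δ : ℝ) (hδ : 0 < δ) (hδ2 : (a : ℝ) + δ < (b : ℝ) - δ) :
    TendstoUniformlyOn
      (fun (n : ℕ) (x : ℝ) =>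
        ∑ k ∈ Finset.Icc ((n : ℤ) * a) ((n : ℤ) * b), phiFn σ ((n : ℝ) * x - (k : ℝ)))
      (fun _ => 1) atTop (Set.Icc ((a : ℝ) + δ) ((b : ℝ) - δ)) := by
  obtain ⟨-, hbot, htop⟩ := hσ
  have hle1 : ∀ x : ℝ, σ x ≤ 1 := fun x =>
    ge_of_tendsto htop (Filter.eventually_atTop.2 ⟨x, fun y hy => hmono hy⟩)
  have hge0 : ∀ x : ℝ, 0 ≤ σ x := fun x =>
    le_of_tendsto hbot (Filter.eventually_atBot.2 ⟨x, fun y hy => hmono hy⟩)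
  rw [Metric.tendstoUniformlyOn_iff]
  intro ε hε
  have hδn : Tendsto (fun n : ℕ => (n:ℝ) * δ) atTop atTop :=
    Tendsto.atTop_mul_const hδ tendsto_natCast_atTop_atTop
  have hA : Tendsto (fun n : ℕ => (1 - σ ((n:ℝ)*δ)) + σ (-((n:ℝ)*δ))) atTop (𝓝 0) := by
    have t1 : Tendsto (fun n : ℕ => 1 - σ ((n:ℝ)*δ)) atTop (𝓝 0) := by
      have := (htop.comp hδn).const_sub 1
      simpa using this
    have t2 : Tendsto (fun n : ℕ => σ (-((n:ℝ)*δ))) atTop (𝓝 0) :=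
      hbot.comp (tendsto_neg_atBot_iff.2 hδn)
    simpa using t1.add t2
  filter_upwards [hA.eventually (gt_mem_nhds hε)] with n hn x hx
  obtain ⟨hx1, hx2⟩ := hx
  set u : ℝ := (n:ℝ) * x with hu
  have hn0 : (0:ℝ) ≤ (n:ℝ) := Nat.cast_nonneg n
  have hAB : (n:ℤ) * a ≤ (n:ℤ) * b :=
    mul_le_mul_of_nonneg_left hab.le (by exact_mod_cast Nat.zero_le n)
  have key : ∑ k ∈ Finset.Icc ((n:ℤ) * a) ((n:ℤ) * b), phiFn σ (u - (k:ℝ))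
      = (σ (u - (n:ℝ)*(a:ℝ) + 1) + σ (u - (n:ℝ)*(a:ℝ)) - σ (u - (n:ℝ)*(b:ℝ))
          - σ (u - (n:ℝ)*(b:ℝ) - 1)) / 2 := by
    have := tele_sum (fun k : ℤ => σ (u - (k:ℝ) + 1)) ((n:ℤ)*a) ((n:ℤ)*b) hAB
    have heq : ∀ k ∈ Finset.Icc ((n:ℤ) * a) ((n:ℤ) * b), phiFn σ (u - (k:ℝ))
        = ((fun k : ℤ => σ (u - (k:ℝ) + 1)) k - (fun k : ℤ => σ (u - (k:ℝ) + 1)) (k+2)) / 2 := by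
      intro k _
      simp only [phiFn]
      push_cast
      ring_nf
    rw [Finset.sum_congr rfl heq, ← Finset.sum_div, this]
    push_cast
    ring_nf
  -- bounds
  have hua : (n:ℝ) * δ ≤ u - (n:ℝ)*(a:ℝ) := by
    have : (n:ℝ) * ((a:ℝ) + δ) ≤ u := mul_le_mul_of_nonneg_left hx1 hn0
    nlinarith
  have hub : u - (n:ℝ)*(b:ℝ) ≤ -((n:ℝ) * δ) := by
    have : u ≤ (n:ℝ) * ((b:ℝ) - δ) := mul_le_mul_of_nonneg_left hx2 hn0
    nlinarith
  have b1 : σ ((n:ℝ)*δ) ≤ σ (u - (n:ℝ)*(a:ℝ) + 1) := hmono (by linarith)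
  have b2 : σ ((n:ℝ)*δ) ≤ σ (u - (n:ℝ)*(a:ℝ)) := hmono hua
  have b3 : σ (u - (n:ℝ)*(b:ℝ)) ≤ σ (-((n:ℝ)*δ)) := hmono hub
  have b4 : σ (u - (n:ℝ)*(b:ℝ) - 1) ≤ σ (-((n:ℝ)*δ)) := hmono (by linarith)
  rw [Real.dist_eq, key]
  have h1a := hle1 (u - (n:ℝ)*(a:ℝ) + 1)
  have h2a := hle1 (u - (n:ℝ)*(a:ℝ))
  have h3a := hge0 (u - (n:ℝ)*(b:ℝ))
  have h4a := hge0 (u - (n:ℝ)*(b:ℝ) - 1)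
  rw [abs_of_nonneg (by linarith)]
  linarith
end
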